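/- Let L be an N×N complex matrix and ρ a density matrix on ℂ^N. Set c_α := Re tr((L† + αI)(L + αI)ρ) for α ∈ ℝ. Then c_α/α² → 1 as α → +∞ (in particular c_α > 0 for all sufficiently large α), and with Υ_α(ρ) := (L + αI)ρ(L† + αI)/c_α − ρ (defined for α large enough that c_α > 0), one has, entrywise, lim_{α→+∞} α·Υ_α(ρ) = Λ(ρ) and lim_{α→+∞} α·Υ_{−α}(ρ) = −Λ(ρ), where Λ(ρ) := Lρ + ρL† − Re tr((L + L†)ρ)·ρ. (The diffusive scaling limit underlying the diffusion approximation of the Poisson-driven stochastic master equation.) -/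

import Mathlib

open Matrix Finset ComplexOrder

/-- The positive semidefinite square root of a matrix (junk value `0` if the matrix is not
positive semidefinite). -/
noncomputable def matSqrt {N : ℕ} (A : Matrix (Fin N) (Fin N) ℂ) : Matrix (Fin N) (Fin N) ℂ :=
  open scoped Classical in
  if h : A.PosSemidef then
    (h.1.eigenvectorUnitary : Matrix (Fin N) (Fin N) ℂ) *
      diagonal ((↑) ∘ (Real.sqrt ·) ∘ h.1.eigenvalues) *
      (star h.1.eigenvectorUnitary : Matrix (Fin N) (Fin N) ℂ) else 0

/-- The fidelity `F(ρ,σ) = Re tr √(√ρ σ √ρ)`. -/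
noncomputable def fid {N : ℕ} (ρ σ : Matrix (Fin N) (Fin N) ℂ) : ℝ :=
  ((matSqrt (matSqrt ρ * σ * matSqrt ρ)).trace).re

/-- A density matrix: Hermitian, positive semidefinite, trace one. -/
def IsDensity {N : ℕ} (ρ : Matrix (Fin N) (Fin N) ℂ) : Prop :=
  ρ.IsHermitian ∧ ρ.PosSemidef ∧ ρ.trace = 1

theorem diffusive_scaling_limit
    (N : ℕ) (L ρ : Matrix (Fin N) (Fin N) ℂ) (hρ : IsDensity ρ)
    (c : ℝ → ℝ)
    (hc : ∀ α, c α = (((Lᴴ + (α : ℂ) • 1) * (L + (α : ℂ) • 1) * ρ).trace).re)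
    (Υ : ℝ → Matrix (Fin N) (Fin N) ℂ)
    (hΥ : ∀ α, Υ α = ((c α : ℂ))⁻¹ • ((L + (α : ℂ) • 1) * ρ * (Lᴴ + (α : ℂ) • 1)) - ρ)
    (Λ : Matrix (Fin N) (Fin N) ℂ)
    (hΛ : Λ = L * ρ + ρ * Lᴴ - ((((L + Lᴴ) * ρ).trace).re : ℂ) • ρ) :
    Filter.Tendsto (fun α : ℝ => c α / α ^ 2) Filter.atTop (nhds 1) ∧
    (∀ᶠ α : ℝ in Filter.atTop, 0 < c α) ∧
    Filter.Tendsto (fun α : ℝ => (α : ℂ) • Υ α) Filter.atTop (nhds Λ) ∧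
    Filter.Tendsto (fun α : ℝ => (α : ℂ) • Υ (-α)) Filter.atTop (nhds (-Λ)) := by
  open Filter in
  obtain ⟨hherm, hpsd, htr⟩ := hρ
  set a : ℝ := ((Lᴴ*L*ρ).trace).re with ha
  set b : ℝ := (((L+Lᴴ)*ρ).trace).re with hb
  set A : Matrix (Fin N) (Fin N) ℂ := L*ρ*Lᴴ with hA
  set B : Matrix (Fin N) (Fin N) ℂ := L*ρ + ρ*Lᴴ with hB
  have hc' : ∀ α : ℝ, c α = a + b * α + α ^ 2 := by
    intro α
    rw [hc]
    have h : ((Lᴴ + (α : ℂ) • 1) * (L + (α : ℂ) • 1) * ρ)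
        = Lᴴ*L*ρ + (α:ℂ) • ((L+Lᴴ)*ρ) + ((α:ℂ)^2) • ρ := by
      simp only [add_mul, mul_add, Matrix.smul_mul, Matrix.mul_smul, smul_smul, Matrix.one_mul,
        Matrix.mul_one, smul_add, pow_two]
      abel
    rw [h]
    simp [Matrix.trace_add, Matrix.trace_smul, htr, Complex.add_re, Complex.re_ofReal_mul,
      ← Complex.ofReal_pow]
    ring
  have key : ∀ ε : ℝ, ε * ε = 1 →
      Tendsto (fun α : ℝ => c (ε*α) / α ^ 2) atTop (nhds 1) ∧
      (∀ᶠ α : ℝ in atTop, 0 < c (ε*α)) ∧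
      Tendsto (fun α : ℝ => (α : ℂ) • Υ (ε*α)) atTop (nhds ((ε:ℂ) • Λ)) := by
    intro ε hε
    have hce : ∀ α : ℝ, c (ε*α) = a + b*ε*α + α^2 := by
      intro α
      rw [hc' (ε*α)]
      ring_nf
      nlinarith [hε]
    have h1 : Tendsto (fun α : ℝ => c (ε*α) / α ^ 2) atTop (nhds 1) := by
      have h0 : Tendsto (fun α : ℝ => a * (α⁻¹)^2 + (b*ε) * α⁻¹ + 1) atTop
          (nhds (a * 0^2 + (b*ε) * 0 + 1)) := by
        exact (((tendsto_inv_atTop_zero.pow 2).const_mul a).add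
          (tendsto_inv_atTop_zero.const_mul (b*ε))).add tendsto_const_nhds
      rw [show (a * 0^2 + (b*ε) * 0 + 1 : ℝ) = 1 by ring] at h0
      refine h0.congr' ?_
      filter_upwards [eventually_gt_atTop (0:ℝ)] with α hα
      rw [hce α]
      field_simp
    have hpos : ∀ᶠ α : ℝ in atTop, 0 < c (ε*α) := by
      filter_upwards [h1.eventually (lt_mem_nhds (by norm_num : (0:ℝ) < 1)),
        eventually_gt_atTop (0:ℝ)] with α h2 hα
      have hα2 : (0:ℝ) < α^2 := by positivity
      have := mul_pos h2 hα2
      rwa [div_mul_cancel₀ _ (ne_of_gt hα2)] at this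
    refine ⟨h1, hpos, ?_⟩
    -- scalar limits
    have hεc : (ε:ℂ) * ε = 1 := by exact_mod_cast hε
    have hs1 : Tendsto (fun α : ℝ => α / c (ε*α)) atTop (nhds 0) := by
      have h0 := tendsto_inv_atTop_zero.div h1 one_ne_zero
      rw [show ((0:ℝ)/1 : ℝ) = 0 by norm_num] at h0
      refine h0.congr' ?_
      filter_upwards [eventually_gt_atTop (0:ℝ)] with α hα
      rcases eq_or_ne (c (ε*α)) 0 with h | h
      · simp [h]
      · simp only [Pi.div_apply]
        field_simp
    have hs2 : Tendsto (fun α : ℝ => ε * α^2 / c (ε*α)) atTop (nhds ε) := by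
      have h0 := (h1.inv₀ one_ne_zero).const_mul ε
      rw [show (ε * 1⁻¹ : ℝ) = ε by norm_num] at h0
      refine h0.congr (fun α => ?_)
      rw [inv_div, mul_div_assoc]
    have hs3 : Tendsto (fun α : ℝ => (-a*α - b*ε*α^2) / c (ε*α)) atTop (nhds (-(b*ε))) := by
      have hnum : Tendsto (fun α : ℝ => -a * α⁻¹ - b*ε) atTop (nhds (-a * 0 - b*ε)) :=
        (tendsto_inv_atTop_zero.const_mul (-a)).sub_const (b*ε)
      have h0 := hnum.div h1 one_ne_zero
      rw [show ((-a * 0 - b*ε)/1 : ℝ) = -(b*ε) by ring] at h0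
      refine h0.congr' ?_
      filter_upwards [eventually_gt_atTop (0:ℝ)] with α hα
      rcases eq_or_ne (c (ε*α)) 0 with h | h
      · simp [h]
      · simp only [Pi.div_apply]
        field_simp
    -- matrix identity
    have hM : ∀ α : ℝ, c (ε*α) ≠ 0 →
        (α:ℂ) • Υ (ε*α) = ((α / c (ε*α) : ℝ):ℂ) • A + ((ε*α^2 / c (ε*α) : ℝ):ℂ) • B
          + (((-a*α - b*ε*α^2) / c (ε*α) : ℝ):ℂ) • ρ := by
      intro α hne
      have hnec : ((c (ε*α) : ℝ):ℂ) ≠ 0 := by exact_mod_cast hne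
      rw [hΥ (ε*α)]
      have hεc2 : (((ε*α : ℝ)):ℂ)^2 = ((α:ℝ):ℂ)^2 := by
        push_cast
        linear_combination ((α:ℂ))^2 * hεc
      have hexp : (L + ((ε*α : ℝ):ℂ) • 1) * ρ * (Lᴴ + ((ε*α : ℝ):ℂ) • 1)
          = A + ((ε*α : ℝ):ℂ) • B + (((α : ℝ):ℂ)^2) • ρ := by
        rw [← hεc2]
        simp only [hA, hB, add_mul, mul_add, Matrix.smul_mul, Matrix.mul_smul, smul_smul,
          Matrix.one_mul, Matrix.mul_one, smul_add, pow_two]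
        abel
      rw [hexp]
      have hcv : c (ε*α) = a + b*ε*α + α^2 := hce α
      rw [hcv] at hnec ⊢
      rw [smul_sub, smul_smul, smul_add, smul_add, smul_smul, smul_smul]
      rw [show ((α:ℂ) • ρ : Matrix (Fin N) (Fin N) ℂ) = ((α:ℝ):ℂ) • ρ from rfl]
      have hQ : ((a:ℂ) + (b:ℂ)*ε*α + (α:ℂ)^2) ≠ 0 := by
        push_cast at hnec
        exact_mod_cast hnec
      have hQ' : (α:ℂ)*b*ε + α^2 + a ≠ 0 := by
        convert hQ using 1
        ring
      match_scalars <;>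
        (push_cast; field_simp; try ring)
      linear_combination (α:ℂ) * mul_inv_cancel₀ hQ'
    -- combine
    have hC : Tendsto (fun α : ℝ => ((α / c (ε*α) : ℝ):ℂ) • A + ((ε*α^2 / c (ε*α) : ℝ):ℂ) • B
          + (((-a*α - b*ε*α^2) / c (ε*α) : ℝ):ℂ) • ρ) atTop
        (nhds (((0:ℝ):ℂ) • A + ((ε:ℝ):ℂ) • B + ((-(b*ε) : ℝ):ℂ) • ρ)) := by
      refine (Tendsto.add ?_ ?_).add ?_
      · exact ((Complex.continuous_ofReal.tendsto 0).comp hs1).smul_const A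
      · exact ((Complex.continuous_ofReal.tendsto ε).comp hs2).smul_const B
      · exact ((Complex.continuous_ofReal.tendsto (-(b*ε))).comp hs3).smul_const ρ
    have hval : (((0:ℝ):ℂ) • A + ((ε:ℝ):ℂ) • B + ((-(b*ε) : ℝ):ℂ) • ρ) = (ε:ℂ) • Λ := by
      rw [hΛ]
      push_cast
      module
    rw [hval] at hC
    refine hC.congr' ?_
    filter_upwards [hpos] with α hα
    exact (hM α (ne_of_gt hα)).symm
  obtain ⟨k1, k2, k3⟩ := key 1 (by norm_num)
  obtain ⟨_, _, k6⟩ := key (-1) (by norm_num)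
  refine ⟨by simpa using k1, by simpa using k2, by simpa using k3, ?_⟩
  have : ∀ α : ℝ, (-1 : ℝ) * α = -α := fun α => by ring
  simpa [this, neg_one_smul] using k6
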